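/- Let G be a group, M a commutative group, and h : G × G → M a normalized 2-cocycle (h(a,b)·h(a·b,c) = h(a,b·c)·h(b,c) for all a, b, c, and h(1,1) = 1). Define H : G × G → M by H(f, g) = h(f, g)·h(f·g·f⁻¹, f)⁻¹. Then H is multiplicative in the first argument along conjugation: for all f, f', g ∈ G, H(f'·f, g) = H(f', f·g·f⁻¹) · H(f, g). Moreover H(1, g) = 1 for every g ∈ G. -/

import Mathlib

lemma aux_comm {M : Type*} [CommGroup M] (A B C D E F P Q R : M)
    (e1 : A * B = C * D) (e2 : E * F = C * P) (e3 : Q * F = R * A) :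
    B * R⁻¹ = E * Q⁻¹ * (D * P⁻¹) := by
  have h1 : A * (B * (Q * F)) = A * (C * (D * R)) := by
    calc A * (B * (Q * F)) = (A * B) * (Q * F) := by group
    _ = (C * D) * (R * A) := by rw [e1, e3]
    _ = A * (C * (D * R)) := by
      simp only [mul_comm, mul_left_comm, mul_assoc]
  have h2 : B * (Q * F) = C * (D * R) := mul_left_cancel h1
  have hC : C = E * F * P⁻¹ := eq_mul_inv_of_mul_eq e2.symm
  rw [hC] at h2
  have key : B * Q = E * D * R * P⁻¹ := by
    apply mul_right_cancel (b := F)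
    calc B * Q * F = B * (Q * F) := by group
    _ = E * F * P⁻¹ * (D * R) := h2
    _ = E * D * R * P⁻¹ * F := by simp only [mul_comm, mul_left_comm, mul_assoc]
  calc B * R⁻¹ = (B * Q) * (Q⁻¹ * R⁻¹) := by group
  _ = E * D * R * P⁻¹ * (Q⁻¹ * R⁻¹) := by rw [key]
  _ = E * Q⁻¹ * (D * P⁻¹) * (R * R⁻¹) := by
      simp only [mul_comm, mul_left_comm, mul_assoc]
  _ = E * Q⁻¹ * (D * P⁻¹) := by simp

/-- The transition datum `H(f,g) = h(f,g)·h(f·g·f⁻¹, f)⁻¹` (equation (14) of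
the paper) of the transgressed line bundle on the inertia groupoid is
multiplicative along conjugation, i.e. a 1-cocycle on the conjugation
groupoid: `H(f'·f, g) = H(f', f·g·f⁻¹)·H(f, g)`, and `H(1, g) = 1`. -/
theorem transgression_cocycle {G M : Type*} [Group G] [CommGroup M]
    (h : G × G → M)
    (hcoc : ∀ a b c : G, h (a, b) * h (a * b, c) = h (a, b * c) * h (b, c))
    (hnorm : h (1, 1) = 1)
    (H : G → G → M)
    (hH : ∀ f g : G, H f g = h (f, g) * (h (f * g * f⁻¹, f))⁻¹) :
    (∀ f f' g : G, H (f' * f) g = H f' (f * g * f⁻¹) * H f g) ∧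
      (∀ g : G, H 1 g = 1) := by
  constructor
  · intro f f' g
    simp only [hH, mul_inv_rev]
    have e1 := hcoc f' f g
    have e2 := hcoc f' (f * g * f⁻¹) f
    have e3 := hcoc (f' * f * g * f⁻¹ * f'⁻¹) f' f
    simp only [mul_assoc, inv_mul_cancel_left, mul_inv_cancel_left, inv_mul_cancel, mul_inv_cancel, mul_one, one_mul] at e1 e2 e3 ⊢
    simpa only [mul_assoc] using aux_comm _ _ _ _ _ _ _ _ _ e1 e2 e3
  · intro g
    have h1g : h (1, g) = 1 := by
      have t := hcoc 1 1 g
      rw [one_mul, one_mul, hnorm, one_mul] at t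
      exact (right_eq_mul.mp t)
    have hg1 : h (g, 1) = 1 := by
      have t := hcoc g 1 1
      rw [mul_one, one_mul, hnorm, mul_one] at t
      exact mul_eq_right.mp t
    simp [hH, h1g, hg1]
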